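/- There exists a constant C > 0 such that for all positive integers m and all irrational θ, B(θ) ≤ B(mθ) + C·log m, where B is the Brjuno sum B(θ) = Σ_{n≥0} (log q_{n+1})/q_n and q_n are the convergent denominators of θ (with the convention B(θ) = +∞ allowed). -/

import Mathlib

/-- The Gauss-map iterates of `α`: `gaussIter α 0 = {α}`, `gaussIter α (n+1) = {1/gaussIter α n}`. -/
noncomputable def gaussIter (α : ℝ) : ℕ → ℝ
  | 0 => Int.fract α
  | n + 1 => Int.fract (1 / gaussIter α n)

/-- Partial quotients of the continued fraction of `α`. -/
noncomputable def cfA (α : ℝ) : ℕ → ℤ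
  | 0 => ⌊α⌋
  | n + 1 => ⌊1 / gaussIter α n⌋

/-- Numerators of the convergents of `α`. -/
noncomputable def cfP (α : ℝ) : ℕ → ℤ
  | 0 => cfA α 0
  | 1 => cfA α 1 * cfA α 0 + 1
  | n + 2 => cfA α (n + 2) * cfP α (n + 1) + cfP α n

/-- Denominators of the convergents of `α`. -/
noncomputable def cfQ (α : ℝ) : ℕ → ℤ
  | 0 => 1
  | 1 => cfA α 1
  | n + 2 => cfA α (n + 2) * cfQ α (n + 1) + cfQ α n

open scoped ENNReal

/-- The Brjuno sum `B(θ) = ∑ (log q_{n+1})/q_n ∈ (0, ∞]`, where `q_n` are the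
convergent denominators of `θ`. -/
noncomputable def brjunoB (θ : ℝ) : ℝ≥0∞ :=
  ∑' n : ℕ, ENNReal.ofReal (Real.log (cfQ θ (n + 1) : ℝ) / (cfQ θ n : ℝ))

namespace BrjunoAux

variable {θ : ℝ}

lemma gaussIter_irrational (hθ : Irrational θ) : ∀ n, Irrational (gaussIter θ n)
  | 0 => by
    have := hθ.sub_intCast ⌊θ⌋
    rw [Int.self_sub_floor] at this
    exact this
  | n + 1 => by
    have h := (gaussIter_irrational hθ n).inv
    have h2 : Irrational (1 / gaussIter θ n) := by rwa [one_div]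
    have := h2.sub_intCast ⌊1 / gaussIter θ n⌋
    rw [Int.self_sub_floor] at this
    exact this

lemma gaussIter_pos (hθ : Irrational θ) (n : ℕ) : 0 < gaussIter θ n := by
  have h1 : 0 ≤ gaussIter θ n := by
    cases n with
    | zero => exact Int.fract_nonneg θ
    | succ k => exact Int.fract_nonneg _
  rcases h1.lt_or_eq with h | h
  · exact h
  · exact absurd (h ▸ (gaussIter_irrational hθ n)) (by simp [Irrational])

lemma gaussIter_lt_one (hθ : Irrational θ) (n : ℕ) : gaussIter θ n < 1 := by
  cases n with
  | zero => exact Int.fract_lt_one θ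
  | succ k => exact Int.fract_lt_one _

lemma one_lt_inv_gaussIter (hθ : Irrational θ) (n : ℕ) : 1 < 1 / gaussIter θ n :=
  (one_lt_one_div (gaussIter_pos hθ n) (gaussIter_lt_one hθ n))

lemma one_le_cfA (hθ : Irrational θ) (n : ℕ) : 1 ≤ cfA θ (n + 1) := by
  rw [show cfA θ (n+1) = ⌊1 / gaussIter θ n⌋ from rfl]
  exact Int.le_floor.mpr (by exact_mod_cast (one_lt_inv_gaussIter hθ n).le)

lemma one_le_cfQ (hθ : Irrational θ) : ∀ n, 1 ≤ cfQ θ n := by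
  intro n
  induction n using Nat.twoStepInduction with
  | zero => simp [cfQ]
  | one => simpa [cfQ] using one_le_cfA hθ 0
  | more n ih1 ih2 =>
    have ha := one_le_cfA hθ (n + 1)
    have : cfQ θ (n + 2) = cfA θ (n + 2) * cfQ θ (n + 1) + cfQ θ n := rfl
    nlinarith

lemma cfQ_le_succ (hθ : Irrational θ) (n : ℕ) : cfQ θ n ≤ cfQ θ (n + 1) := by
  cases n with
  | zero => simpa [cfQ] using one_le_cfA hθ 0
  | succ k =>
    have ha := one_le_cfA hθ (k + 1)
    have h1 := one_le_cfQ hθ k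
    have h2 := one_le_cfQ hθ (k + 1)
    have : cfQ θ (k + 2) = cfA θ (k + 2) * cfQ θ (k + 1) + cfQ θ k := rfl
    nlinarith

lemma cfQ_mono (hθ : Irrational θ) : Monotone (cfQ θ) :=
  monotone_nat_of_le_succ (cfQ_le_succ hθ)

lemma two_mul_cfQ_le (hθ : Irrational θ) (n : ℕ) : 2 * cfQ θ n ≤ cfQ θ (n + 2) := by
  have ha := one_le_cfA hθ (n + 1)
  have h1 := one_le_cfQ hθ n
  have h2 := cfQ_le_succ hθ n
  have h3 := one_le_cfQ hθ (n + 1)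
  have : cfQ θ (n + 2) = cfA θ (n + 2) * cfQ θ (n + 1) + cfQ θ n := rfl
  nlinarith

lemma pow_le_cfQ (hθ : Irrational θ) : ∀ k i, i ≤ 1 → (2 : ℤ) ^ k ≤ cfQ θ (2 * k + i) := by
  intro k
  induction k with
  | zero =>
    intro i hi
    interval_cases i
    · simp [cfQ]
    · simpa [cfQ] using one_le_cfA hθ 0
  | succ k ih =>
    intro i hi
    have h1 := ih i hi
    have h2 := two_mul_cfQ_le hθ (2 * k + i)
    have : 2 * (k+1) + i = (2 * k + i) + 2 := by ring
    rw [this]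
    calc (2:ℤ)^(k+1) = 2 * 2^k := by ring
    _ ≤ 2 * cfQ θ (2*k+i) := by linarith
    _ ≤ _ := h2


/-- `cfB θ n = ∏_{k=0}^n gaussIter θ k` -/
noncomputable def cfB (θ : ℝ) (n : ℕ) : ℝ := ∏ k ∈ Finset.range (n + 1), gaussIter θ k

lemma cfB_zero : cfB θ 0 = gaussIter θ 0 := by simp [cfB]

lemma cfB_succ (n : ℕ) : cfB θ (n + 1) = cfB θ n * gaussIter θ (n + 1) :=
  Finset.prod_range_succ _ _

lemma cfB_pos (hθ : Irrational θ) (n : ℕ) : 0 < cfB θ n :=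
  Finset.prod_pos fun k _ => gaussIter_pos hθ k

lemma cfB_succ_lt (hθ : Irrational θ) (n : ℕ) : cfB θ (n + 1) < cfB θ n := by
  rw [cfB_succ]
  nlinarith [cfB_pos hθ n, gaussIter_pos hθ (n+1), gaussIter_lt_one hθ (n+1)]

lemma floor_add_fract (x : ℝ) : (⌊x⌋ : ℝ) + Int.fract x = x := by
  rw [Int.fract]; ring

/-- Key identity: `q_n θ - p_n = (-1)^n β_n`. -/
lemma key_identity (hθ : Irrational θ) :
    ∀ n, (cfQ θ n : ℝ) * θ - (cfP θ n : ℝ) = (-1) ^ n * cfB θ n := by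
  intro n
  induction n using Nat.twoStepInduction with
  | zero =>
    show ((1 : ℤ) : ℝ) * θ - ((⌊θ⌋ : ℤ) : ℝ) = (-1) ^ 0 * cfB θ 0
    rw [cfB_zero]
    show _ = (-1 : ℝ) ^ 0 * Int.fract θ
    rw [Int.fract]
    push_cast
    ring
  | one =>
    have hα0 : gaussIter θ 0 = θ - (⌊θ⌋ : ℝ) := by
      show Int.fract θ = _; rw [Int.fract]
    have hα1 : gaussIter θ 1 = 1 / gaussIter θ 0 - (cfA θ 1 : ℝ) := by
      show Int.fract _ = _; rw [Int.fract]; rfl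
    have h0 : gaussIter θ 0 ≠ 0 := ne_of_gt (gaussIter_pos hθ 0)
    have hprod : gaussIter θ 0 * gaussIter θ 1 = 1 - (cfA θ 1 : ℝ) * gaussIter θ 0 := by
      rw [hα1]; field_simp
    show ((cfA θ 1 : ℤ) : ℝ) * θ - ((cfA θ 1 * cfA θ 0 + 1 : ℤ) : ℝ) = (-1) ^ 1 * cfB θ 1
    have hq : cfA θ 0 = ⌊θ⌋ := rfl
    rw [cfB_succ, cfB_zero, hprod]
    push_cast [hq]
    linear_combination (-(cfA θ 1 : ℝ)) * hα0
  | more n ih1 ih2 =>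
    have hrecP : cfP θ (n + 2) = cfA θ (n + 2) * cfP θ (n + 1) + cfP θ n := rfl
    have hrecQ : cfQ θ (n + 2) = cfA θ (n + 2) * cfQ θ (n + 1) + cfQ θ n := rfl
    have hα : gaussIter θ (n + 2) = 1 / gaussIter θ (n + 1) - (cfA θ (n + 2) : ℝ) := by
      show Int.fract _ = _; rw [Int.fract]; rfl
    have h0 : gaussIter θ (n + 1) ≠ 0 := ne_of_gt (gaussIter_pos hθ (n + 1))
    have e1 : cfB θ (n + 2) = cfB θ (n + 1) * gaussIter θ (n + 2) := cfB_succ _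
    have e2 : cfB θ (n + 1) = cfB θ n * gaussIter θ (n + 1) := cfB_succ _
    have hprod : cfB θ (n + 2) = cfB θ n - (cfA θ (n + 2) : ℝ) * cfB θ (n + 1) := by
      rw [e1, hα]
      rw [mul_sub]
      rw [e2]
      field_simp
    have hpow : (-1 : ℝ) ^ (n + 2) = (-1) ^ n := by rw [pow_add]; norm_num
    rw [pow_succ] at ih2
    rw [hrecP, hrecQ, hprod, hpow]
    push_cast
    linear_combination ih1 + (cfA θ (n + 2) : ℝ) * ih2

/-- `q_{n+1} β_n + q_n β_{n+1} = 1`. -/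
lemma one_identity (hθ : Irrational θ) :
    ∀ n, (cfQ θ (n + 1) : ℝ) * cfB θ n + (cfQ θ n : ℝ) * cfB θ (n + 1) = 1 := by
  intro n
  induction n with
  | zero =>
    have hα0 : gaussIter θ 0 = Int.fract θ := rfl
    have hα1 : gaussIter θ 1 = 1 / gaussIter θ 0 - (cfA θ 1 : ℝ) := by
      show Int.fract _ = _; rw [Int.fract]; rfl
    have h0 : gaussIter θ 0 ≠ 0 := ne_of_gt (gaussIter_pos hθ 0)
    show ((cfA θ 1 : ℤ) : ℝ) * cfB θ 0 + ((1 : ℤ) : ℝ) * cfB θ 1 = 1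
    rw [cfB_succ, cfB_zero, hα1]
    push_cast
    field_simp
    ring
  | succ n ih =>
    have hrecQ : cfQ θ (n + 2) = cfA θ (n + 2) * cfQ θ (n + 1) + cfQ θ n := rfl
    have hα : gaussIter θ (n + 2) = 1 / gaussIter θ (n + 1) - (cfA θ (n + 2) : ℝ) := by
      show Int.fract _ = _; rw [Int.fract]; rfl
    have h0 : gaussIter θ (n + 1) ≠ 0 := ne_of_gt (gaussIter_pos hθ (n + 1))
    have e1 : cfB θ (n + 2) = cfB θ (n + 1) * gaussIter θ (n + 2) := cfB_succ _
    have e2 : cfB θ (n + 1) = cfB θ n * gaussIter θ (n + 1) := cfB_succ _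
    have hprod : cfB θ (n + 2) = cfB θ n - (cfA θ (n + 2) : ℝ) * cfB θ (n + 1) := by
      rw [e1, hα, mul_sub, e2]
      field_simp
    rw [hrecQ, hprod]
    push_cast
    linear_combination ih

lemma cfB_mul_lt_one (hθ : Irrational θ) (n : ℕ) : (cfQ θ (n + 1) : ℝ) * cfB θ n < 1 := by
  have h1 := one_identity hθ n
  have h2 : (0 : ℝ) < (cfQ θ n : ℝ) := by exact_mod_cast one_le_cfQ hθ n
  nlinarith [cfB_pos hθ (n + 1)]

lemma one_lt_two_cfQ_mul_cfB (hθ : Irrational θ) (n : ℕ) :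
    1 < 2 * (cfQ θ (n + 1) : ℝ) * cfB θ n := by
  have h1 := one_identity hθ n
  have hq : (cfQ θ n : ℝ) ≤ (cfQ θ (n + 1) : ℝ) := by exact_mod_cast cfQ_le_succ hθ n
  have h2 : (0 : ℝ) < (cfQ θ n : ℝ) := by exact_mod_cast one_le_cfQ hθ n
  nlinarith [cfB_succ_lt hθ n, cfB_pos hθ n, cfB_pos hθ (n + 1)]

/-- Determinant identity. -/
lemma det_identity (hθ : Irrational θ) :
    ∀ n, cfP θ (n + 1) * cfQ θ n - cfP θ n * cfQ θ (n + 1) = (-1) ^ n := by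
  intro n
  induction n using Nat.twoStepInduction with
  | zero => show (cfA θ 1 * cfA θ 0 + 1) * 1 - cfA θ 0 * cfA θ 1 = 1; ring
  | one =>
    show (cfA θ 2 * cfP θ 1 + cfP θ 0) * cfQ θ 1 - cfP θ 1 * (cfA θ 2 * cfQ θ 1 + cfQ θ 0) = -1
    show (cfA θ 2 * cfP θ 1 + cfA θ 0) * cfA θ 1 - cfP θ 1 * (cfA θ 2 * cfA θ 1 + 1) = -1
    show (cfA θ 2 * (cfA θ 1 * cfA θ 0 + 1) + cfA θ 0) * cfA θ 1
      - (cfA θ 1 * cfA θ 0 + 1) * (cfA θ 2 * cfA θ 1 + 1) = -1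
    ring
  | more n ih1 ih2 =>
    have hrecP : cfP θ (n + 3) = cfA θ (n + 3) * cfP θ (n + 2) + cfP θ (n + 1) := rfl
    have hrecQ : cfQ θ (n + 3) = cfA θ (n + 3) * cfQ θ (n + 2) + cfQ θ (n + 1) := rfl
    have hpow : (-1 : ℤ) ^ (n + 2) = (-1) ^ n := by rw [pow_add]; norm_num
    rw [hrecP, hrecQ, hpow]
    rw [pow_succ] at ih2
    linear_combination (-1 : ℤ) * ih2

lemma coprime_cfP_cfQ (hθ : Irrational θ) (n : ℕ) : IsCoprime (cfP θ n) (cfQ θ n) := by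
  have h := det_identity hθ n
  rcases Nat.even_or_odd n with he | ho
  · exact ⟨-(cfQ θ (n+1)), cfP θ (n+1), by rw [← (Even.neg_one_pow he : (-1:ℤ)^n = 1), ← h]; ring⟩
  · refine ⟨cfQ θ (n+1), -(cfP θ (n+1)), ?_⟩
    rw [Odd.neg_one_pow ho] at h
    linear_combination -h

/-- Shift: the Gauss iterates of `(fract ξ)⁻¹` are those of `ξ`, shifted. -/
lemma gaussIter_shift (ξ : ℝ) : ∀ k, gaussIter (Int.fract ξ)⁻¹ k = gaussIter ξ (k + 1)
  | 0 => by
    show Int.fract (Int.fract ξ)⁻¹ = Int.fract (1 / gaussIter ξ 0)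
    rw [one_div]; rfl
  | k + 1 => by
    show Int.fract (1 / gaussIter (Int.fract ξ)⁻¹ k) = Int.fract (1 / gaussIter ξ (k + 1))
    rw [gaussIter_shift ξ k]

lemma cfA_shift (ξ : ℝ) : ∀ k, cfA (Int.fract ξ)⁻¹ k = cfA ξ (k + 1)
  | 0 => by show ⌊(Int.fract ξ)⁻¹⌋ = ⌊1 / gaussIter ξ 0⌋; rw [one_div]; rfl
  | k + 1 => by
    show ⌊1 / gaussIter (Int.fract ξ)⁻¹ k⌋ = ⌊1 / gaussIter ξ (k + 1)⌋
    rw [gaussIter_shift ξ k]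

lemma cfPQ_shift (ξ : ℝ) : ∀ n, cfQ ξ (n + 1) = cfP (Int.fract ξ)⁻¹ n ∧
    cfP ξ (n + 1) = ⌊ξ⌋ * cfP (Int.fract ξ)⁻¹ n + cfQ (Int.fract ξ)⁻¹ n := by
  intro n
  induction n using Nat.twoStepInduction with
  | zero =>
    constructor
    · show cfA ξ 1 = cfA (Int.fract ξ)⁻¹ 0
      rw [cfA_shift]
    · show cfA ξ 1 * cfA ξ 0 + 1 = ⌊ξ⌋ * cfA (Int.fract ξ)⁻¹ 0 + 1
      rw [cfA_shift]
      show cfA ξ 1 * ⌊ξ⌋ + 1 = _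
      ring
  | one =>
    have h1 := cfA_shift ξ 0
    have h2 := cfA_shift ξ 1
    constructor
    · show cfA ξ 2 * cfQ ξ 1 + cfQ ξ 0 = cfA (Int.fract ξ)⁻¹ 1 * cfP (Int.fract ξ)⁻¹ 0 + 1
      show cfA ξ 2 * cfA ξ 1 + 1 = cfA (Int.fract ξ)⁻¹ 1 * cfA (Int.fract ξ)⁻¹ 0 + 1
      rw [h1, h2]
    · show cfA ξ 2 * cfP ξ 1 + cfP ξ 0
        = ⌊ξ⌋ * (cfA (Int.fract ξ)⁻¹ 1 * cfP (Int.fract ξ)⁻¹ 0 + 1) + cfA (Int.fract ξ)⁻¹ 1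
      show cfA ξ 2 * (cfA ξ 1 * cfA ξ 0 + 1) + cfA ξ 0
        = ⌊ξ⌋ * (cfA (Int.fract ξ)⁻¹ 1 * cfA (Int.fract ξ)⁻¹ 0 + 1) + cfA (Int.fract ξ)⁻¹ 1
      rw [h1, h2]
      show cfA ξ 2 * (cfA ξ 1 * ⌊ξ⌋ + 1) + ⌊ξ⌋ = ⌊ξ⌋ * (cfA ξ 2 * cfA ξ 1 + 1) + cfA ξ 2
      ring
  | more n ih1 ih2 =>
    have ha := cfA_shift ξ (n + 2)
    constructor
    · show cfA ξ (n + 3) * cfQ ξ (n + 2) + cfQ ξ (n + 1)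
        = cfA (Int.fract ξ)⁻¹ (n + 2) * cfP (Int.fract ξ)⁻¹ (n + 1) + cfP (Int.fract ξ)⁻¹ n
      rw [ha, ih1.1, ih2.1]
    · show cfA ξ (n + 3) * cfP ξ (n + 2) + cfP ξ (n + 1)
        = ⌊ξ⌋ * (cfA (Int.fract ξ)⁻¹ (n + 2) * cfP (Int.fract ξ)⁻¹ (n + 1) + cfP (Int.fract ξ)⁻¹ n)
          + (cfA (Int.fract ξ)⁻¹ (n + 2) * cfQ (Int.fract ξ)⁻¹ (n + 1) + cfQ (Int.fract ξ)⁻¹ n)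
      rw [ha, ih1.2, ih2.2]
      ring

lemma one_le_cfP_of_one_lt {ξ : ℝ} (hξ : Irrational ξ) (h1 : 1 < ξ) : ∀ n, 1 ≤ cfP ξ n := by
  intro n
  have h0 : 1 ≤ cfA ξ 0 := by
    show 1 ≤ ⌊ξ⌋
    exact Int.le_floor.mpr (by exact_mod_cast h1.le)
  induction n using Nat.twoStepInduction with
  | zero => exact h0
  | one =>
    have := one_le_cfA hξ 0
    show 1 ≤ cfA ξ 1 * cfA ξ 0 + 1
    nlinarith
  | more n ih1 ih2 =>
    have := one_le_cfA hξ (n + 1)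
    show 1 ≤ cfA ξ (n + 2) * cfP ξ (n + 1) + cfP ξ n
    nlinarith

lemma fract_inv_irrational {ξ : ℝ} (hξ : Irrational ξ) : Irrational (Int.fract ξ)⁻¹ := by
  have := gaussIter_irrational hξ 0
  exact this.inv

lemma one_lt_fract_inv {ξ : ℝ} (hξ : Irrational ξ) : 1 < (Int.fract ξ)⁻¹ := by
  have h := one_lt_inv_gaussIter hξ 0
  rwa [one_div] at h

/-- The convergents of `Real.convergent` agree with `cfP/cfQ`. -/
lemma convergent_eq (n : ℕ) : ∀ ξ : ℝ, Irrational ξ →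
    Real.convergent ξ n = (cfP ξ n : ℚ) / (cfQ ξ n : ℚ) := by
  induction n with
  | zero =>
    intro ξ hξ
    rw [Real.convergent_zero]
    show _ = ((cfA ξ 0 : ℤ) : ℚ) / ((1 : ℤ) : ℚ)
    show ((⌊ξ⌋ : ℤ) : ℚ) = ((⌊ξ⌋ : ℤ) : ℚ) / ((1 : ℤ) : ℚ)
    norm_num
  | succ n ih =>
    intro ξ hξ
    have hξ' := fract_inv_irrational hξ
    have hP := (cfPQ_shift ξ n).2
    have hQ := (cfPQ_shift ξ n).1
    have hpos : 1 ≤ cfP (Int.fract ξ)⁻¹ n := one_le_cfP_of_one_lt hξ' (one_lt_fract_inv hξ) n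
    have hqpos : 1 ≤ cfQ (Int.fract ξ)⁻¹ n := one_le_cfQ hξ' n
    have hp0 : ((cfP (Int.fract ξ)⁻¹ n : ℚ)) ≠ 0 := by
      have : (0:ℤ) < cfP (Int.fract ξ)⁻¹ n := by omega
      exact_mod_cast this.ne'
    have hq0 : ((cfQ (Int.fract ξ)⁻¹ n : ℚ)) ≠ 0 := by
      have : (0:ℤ) < cfQ (Int.fract ξ)⁻¹ n := by omega
      exact_mod_cast this.ne'
    rw [Real.convergent_succ, ih _ hξ', hP, hQ]
    push_cast
    rw [inv_div, add_div, mul_div_cancel_right₀ _ hp0]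

lemma convergent_num_den {ξ : ℝ} (hξ : Irrational ξ) (j : ℕ) :
    (Real.convergent ξ j).num = cfP ξ j ∧ ((Real.convergent ξ j).den : ℤ) = cfQ ξ j := by
  have hq : 0 < cfQ ξ j := by have := one_le_cfQ hξ j; omega
  have hcop : Nat.Coprime (cfP ξ j).natAbs (cfQ ξ j).natAbs :=
    Int.isCoprime_iff_gcd_eq_one.mp (coprime_cfP_cfQ hξ j)
  rw [convergent_eq j ξ hξ]
  exact ⟨Rat.num_div_eq_of_coprime hq hcop, Rat.den_div_eq_of_coprime hq hcop⟩

set_option maxHeartbeats 1000000 in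
lemma big_jump (hθ : Irrational θ) {m : ℕ} (hm : 0 < m) (n : ℕ)
    (h : 2 * (m : ℤ) * cfQ θ n < cfQ θ (n + 1)) :
    ∃ j, cfQ ((m : ℝ) * θ) j ≤ cfQ θ n ∧ cfQ θ n ≤ (m : ℤ) * cfQ ((m : ℝ) * θ) j ∧
      cfQ θ (n + 1) ≤ 2 * (m : ℤ) * cfQ ((m : ℝ) * θ) (j + 1) := by
  have hξ : Irrational ((m : ℝ) * θ) := hθ.natCast_mul hm.ne'
  set ξ : ℝ := (m : ℝ) * θ with hxi
  have hqn : (0 : ℤ) < cfQ θ n := by have := one_le_cfQ hθ n; omega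
  have hqn1 : (0 : ℤ) < cfQ θ (n + 1) := by have := one_le_cfQ hθ (n + 1); omega
  have hqnR : (0 : ℝ) < (cfQ θ n : ℝ) := by exact_mod_cast hqn
  have hqn1R : (0 : ℝ) < (cfQ θ (n + 1) : ℝ) := by exact_mod_cast hqn1
  have hmR : (0 : ℝ) < (m : ℝ) := by exact_mod_cast hm
  have hkey := key_identity hθ n
  have hBpos := cfB_pos hθ n
  have hBlt := cfB_mul_lt_one hθ n
  set r : ℚ := ((m * cfP θ n : ℤ) : ℚ) / ((cfQ θ n : ℤ) : ℚ) with hr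
  have hrden_dvd : ((r.den : ℤ)) ∣ cfQ θ n := by
    rw [hr, ← Rat.divInt_eq_div]; exact Rat.den_dvd _ _
  have hrden_pos : (0 : ℤ) < (r.den : ℤ) := by exact_mod_cast r.pos
  have hrden_le : (r.den : ℤ) ≤ cfQ θ n := Int.le_of_dvd hqn hrden_dvd
  have hcast : ((r : ℚ) : ℝ) = ((m : ℝ) * (cfP θ n : ℝ)) / (cfQ θ n : ℝ) := by
    rw [hr]; push_cast; ring
  have habs : |ξ - (r : ℝ)| = (m : ℝ) * cfB θ n / (cfQ θ n : ℝ) := by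
    have hdiff : ξ - (r : ℝ) = ((-1) ^ n * cfB θ n) * (m : ℝ) / (cfQ θ n : ℝ) := by
      rw [hcast, hxi, ← hkey]; field_simp
    have habs1 : |(-1 : ℝ) ^ n| = 1 := by rw [abs_pow, abs_neg, abs_one, one_pow]
    rw [hdiff, abs_div, abs_mul, abs_mul, habs1, one_mul, abs_of_pos hBpos,
      abs_of_pos hmR, abs_of_pos hqnR]
    ring
  have hR : (2 * (m : ℝ) * (cfQ θ n : ℝ)) < (cfQ θ (n + 1) : ℝ) := by exact_mod_cast h
  have hlt : |ξ - (r : ℝ)| < 1 / (2 * (r.den : ℝ) ^ 2) := by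
    rw [habs]
    have c1 : (2 * (m : ℝ) * (cfQ θ n : ℝ)) * cfB θ n < 1 :=
      lt_trans (mul_lt_mul_of_pos_right hR hBpos) hBlt
    have hdenR : (0 : ℝ) < (r.den : ℝ) := by exact_mod_cast hrden_pos
    have hdenle : (r.den : ℝ) ≤ (cfQ θ n : ℝ) := by exact_mod_cast hrden_le
    rw [div_lt_div_iff₀ (by positivity) (by positivity)]
    have hden2 : (r.den : ℝ) ^ 2 ≤ (cfQ θ n : ℝ) ^ 2 := by nlinarith
    have c2 : (m : ℝ) * cfB θ n * (2 * (cfQ θ n : ℝ) ^ 2) < 1 * (cfQ θ n : ℝ) := by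
      have := mul_lt_mul_of_pos_right c1 hqnR
      nlinarith
    calc (m : ℝ) * cfB θ n * (2 * (r.den : ℝ) ^ 2)
        ≤ (m : ℝ) * cfB θ n * (2 * (cfQ θ n : ℝ) ^ 2) := by
          have h9 := mul_le_mul_of_nonneg_left hden2 (mul_nonneg hmR.le hBpos.le)
          nlinarith [h9]
      _ < 1 * (cfQ θ n : ℝ) := c2
  obtain ⟨j, hj⟩ := Real.exists_rat_eq_convergent hlt
  refine ⟨j, ?_⟩
  have hnd := convergent_num_den hξ j
  rw [← hj] at hnd
  obtain ⟨hnum, hden⟩ := hnd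
  set P := cfP ξ j with hPdef
  set Q := cfQ ξ j with hQdef
  have hQpos : (0 : ℤ) < Q := by have := one_le_cfQ hξ j; omega
  have hQdvd : Q ∣ cfQ θ n := hden ▸ hrden_dvd
  have hQle : Q ≤ cfQ θ n := Int.le_of_dvd hqn hQdvd
  set g : ℤ := cfQ θ n / Q with hgdef
  have hQg : Q * g = cfQ θ n := Int.mul_ediv_cancel' hQdvd
  have hgpos : (0 : ℤ) < g := by nlinarith
  -- cross identity
  have hcrossQ : (P : ℚ) / (Q : ℚ) = ((m * cfP θ n : ℤ) : ℚ) / ((cfQ θ n : ℤ) : ℚ) := by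
    rw [← hr, ← hnum, ← hden]
    push_cast
    exact Rat.num_div_den r
  have hQ0 : ((Q : ℤ) : ℚ) ≠ 0 := by exact_mod_cast hQpos.ne'
  have hq0 : ((cfQ θ n : ℤ) : ℚ) ≠ 0 := by exact_mod_cast hqn.ne'
  have hcross : P * cfQ θ n = (m * cfP θ n) * Q := by
    have := (div_eq_div_iff hQ0 hq0).mp hcrossQ
    exact_mod_cast this
  have hPg : P * g = (m : ℤ) * cfP θ n := by
    have h5 : Q * (P * g) = Q * ((m : ℤ) * cfP θ n) := by linear_combination P * hQg + hcross
    exact mul_left_cancel₀ hQpos.ne' h5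
  have hgdvd : g ∣ (m : ℤ) := by
    have hgp : g ∣ (m : ℤ) * cfP θ n := ⟨P, by rw [← hPg]; ring⟩
    have hgdvdq : g ∣ cfQ θ n := ⟨Q, by rw [← hQg]; ring⟩
    have hcp : IsCoprime g (cfP θ n) :=
      ((coprime_cfP_cfQ hθ n).of_isCoprime_of_dvd_right hgdvdq).symm
    exact hcp.dvd_of_dvd_mul_right hgp
  have hgle : g ≤ (m : ℤ) := Int.le_of_dvd (by exact_mod_cast hm) hgdvd
  refine ⟨hQle, by nlinarith, ?_⟩
  -- third bound
  have hkey' := key_identity hξ j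
  have hB'pos := cfB_pos hξ j
  have hgR : (1 : ℝ) ≤ (g : ℝ) := by exact_mod_cast hgpos
  have hQgR : (Q : ℝ) * (g : ℝ) = (cfQ θ n : ℝ) := by exact_mod_cast hQg
  have hPgR : (P : ℝ) * (g : ℝ) = (m : ℝ) * (cfP θ n : ℝ) := by exact_mod_cast hPg
  have hgB' : (g : ℝ) * cfB ξ j = (m : ℝ) * cfB θ n := by
    have h6 : (g : ℝ) * ((-1) ^ j * cfB ξ j) = (m : ℝ) * ((-1) ^ n * cfB θ n) := by
      rw [← hkey', ← hkey, hxi]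
      linear_combination ((m : ℝ) * θ) * hQgR - hPgR
    have h7 : |(g : ℝ) * ((-1) ^ j * cfB ξ j)| = |(m : ℝ) * ((-1) ^ n * cfB θ n)| := by rw [h6]
    have e1 : |(-1 : ℝ) ^ j| = 1 := by rw [abs_pow, abs_neg, abs_one, one_pow]
    have e2 : |(-1 : ℝ) ^ n| = 1 := by rw [abs_pow, abs_neg, abs_one, one_pow]
    rw [abs_mul, abs_mul, abs_mul, abs_mul, e1, e2, one_mul, one_mul,
      abs_of_pos hB'pos, abs_of_pos hBpos, abs_of_pos hmR,
      abs_of_pos (by exact_mod_cast hgpos : (0:ℝ) < (g:ℝ))] at h7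
    exact h7
  have hble : cfB ξ j ≤ (m : ℝ) * cfB θ n := by nlinarith
  have hbig := one_lt_two_cfQ_mul_cfB hξ j
  have hQj1R : (0 : ℝ) < (cfQ ξ (j + 1) : ℝ) := by
    have := one_le_cfQ hξ (j + 1); exact_mod_cast (by omega : (0:ℤ) < cfQ ξ (j+1))
  have hfinal : (cfQ θ (n + 1) : ℝ) < 2 * (m : ℝ) * (cfQ ξ (j + 1) : ℝ) := by
    have s1 : (cfQ θ (n+1) : ℝ) < (cfQ θ (n+1) : ℝ) * (2 * (cfQ ξ (j+1) : ℝ) * cfB ξ j) :=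
      (lt_mul_iff_one_lt_right hqn1R).mpr hbig
    have s2 : (cfQ θ (n+1) : ℝ) * (2 * (cfQ ξ (j+1) : ℝ) * cfB ξ j)
        ≤ (cfQ θ (n+1) : ℝ) * (2 * (cfQ ξ (j+1) : ℝ) * ((m : ℝ) * cfB θ n)) := by
      gcongr
    have s4 : 2 * (m:ℝ) * (cfQ ξ (j+1) : ℝ) * ((cfQ θ (n+1) : ℝ) * cfB θ n)
        < 2 * (m:ℝ) * (cfQ ξ (j+1) : ℝ) * 1 :=
      mul_lt_mul_of_pos_left hBlt (by positivity)
    nlinarith [s1, s2, s4]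
  have : (cfQ θ (n + 1) : ℤ) < 2 * (m : ℤ) * cfQ ξ (j + 1) := by exact_mod_cast hfinal
  omega

lemma ofReal_half : ENNReal.ofReal (1/2 : ℝ) = 2⁻¹ := by
  rw [one_div, ENNReal.ofReal_inv_of_pos (by norm_num)]
  norm_num

lemma sum_inv_cfQ (hθ : Irrational θ) :
    (∑' n : ℕ, ENNReal.ofReal (1 / (cfQ θ n : ℝ))) ≤ 4 := by
  rw [← tsum_even_add_odd ENNReal.summable ENNReal.summable]
  have key : ∀ i ≤ 1, (∑' k : ℕ, ENNReal.ofReal (1 / (cfQ θ (2 * k + i) : ℝ))) ≤ 2 := by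
    intro i hi
    have hb : ∀ k : ℕ, ENNReal.ofReal (1 / (cfQ θ (2 * k + i) : ℝ)) ≤ (2 : ℝ≥0∞)⁻¹ ^ k := by
      intro k
      have h1 : (2 : ℝ) ^ k ≤ (cfQ θ (2 * k + i) : ℝ) := by exact_mod_cast pow_le_cfQ hθ k i hi
      have h3 : (1 : ℝ) / (cfQ θ (2 * k + i) : ℝ) ≤ (1/2) ^ k := by
        rw [div_pow, one_pow]
        exact one_div_le_one_div_of_le (by positivity) h1
      calc ENNReal.ofReal (1 / (cfQ θ (2 * k + i) : ℝ)) ≤ ENNReal.ofReal ((1/2 : ℝ) ^ k) :=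
            ENNReal.ofReal_le_ofReal h3
        _ = (2 : ℝ≥0∞)⁻¹ ^ k := by rw [ENNReal.ofReal_pow (by norm_num), ofReal_half]
    calc ∑' k : ℕ, ENNReal.ofReal (1 / (cfQ θ (2 * k + i) : ℝ))
        ≤ ∑' k : ℕ, (2 : ℝ≥0∞)⁻¹ ^ k := ENNReal.tsum_le_tsum hb
      _ = (1 - 2⁻¹)⁻¹ := ENNReal.tsum_geometric _
      _ = 2 := by rw [ENNReal.one_sub_inv_two, inv_inv]
  calc (∑' k : ℕ, ENNReal.ofReal (1 / (cfQ θ (2 * k) : ℝ)))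
        + ∑' k : ℕ, ENNReal.ofReal (1 / (cfQ θ (2 * k + 1) : ℝ))
      ≤ 2 + 2 := by
        gcongr
        · simpa using key 0 (by norm_num)
        · exact key 1 le_rfl
    _ = 4 := by norm_num

lemma sum_inv_sqrt_cfQ (hθ : Irrational θ) :
    (∑' n : ℕ, ENNReal.ofReal (1 / Real.sqrt (cfQ θ n : ℝ))) ≤ 8 := by
  rw [← tsum_even_add_odd ENNReal.summable ENNReal.summable]
  have key : ∀ i ≤ 1, (∑' k : ℕ, ENNReal.ofReal (1 / Real.sqrt (cfQ θ (2 * k + i) : ℝ))) ≤ 4 := by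
    intro i hi
    have hb : ∀ k : ℕ, ENNReal.ofReal (1 / Real.sqrt (cfQ θ (2 * k + i) : ℝ))
        ≤ (ENNReal.ofReal (3/4)) ^ k := by
      intro k
      have h1 : (2 : ℝ) ^ k ≤ (cfQ θ (2 * k + i) : ℝ) := by exact_mod_cast pow_le_cfQ hθ k i hi
      have h2 : ((4:ℝ)/3) ^ k ≤ Real.sqrt ((cfQ θ (2 * k + i) : ℝ)) := by
        rw [show ((4:ℝ)/3) ^ k = Real.sqrt ((((4:ℝ)/3) ^ k) ^ 2) from
          (Real.sqrt_sq (by positivity)).symm]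
        apply Real.sqrt_le_sqrt
        calc (((4:ℝ)/3) ^ k) ^ 2 = ((16:ℝ)/9) ^ k := by rw [← pow_mul, mul_comm, pow_mul]; norm_num
          _ ≤ (2:ℝ) ^ k := pow_le_pow_left₀ (by norm_num) (by norm_num) k
          _ ≤ _ := h1
      have h3 : (1 : ℝ) / Real.sqrt (cfQ θ (2 * k + i) : ℝ) ≤ (3/4) ^ k := by
        have := one_div_le_one_div_of_le (by positivity) h2
        calc (1 : ℝ) / Real.sqrt (cfQ θ (2 * k + i) : ℝ) ≤ 1 / ((4:ℝ)/3) ^ k := this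
          _ = (3/4) ^ k := by rw [one_div, ← inv_pow]; norm_num
      calc ENNReal.ofReal (1 / Real.sqrt (cfQ θ (2 * k + i) : ℝ))
          ≤ ENNReal.ofReal ((3/4 : ℝ) ^ k) := ENNReal.ofReal_le_ofReal h3
        _ = (ENNReal.ofReal (3/4)) ^ k := ENNReal.ofReal_pow (by norm_num) k
    calc ∑' k : ℕ, ENNReal.ofReal (1 / Real.sqrt (cfQ θ (2 * k + i) : ℝ))
        ≤ ∑' k : ℕ, (ENNReal.ofReal (3/4)) ^ k := ENNReal.tsum_le_tsum hb
      _ = (1 - ENNReal.ofReal (3/4))⁻¹ := ENNReal.tsum_geometric _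
      _ = 4 := by
          rw [← ENNReal.ofReal_one, ← ENNReal.ofReal_sub _ (by norm_num : (0:ℝ) ≤ 3/4)]
          rw [show (1 : ℝ) - 3/4 = 1/4 by norm_num, one_div,
            ENNReal.ofReal_inv_of_pos (by norm_num), inv_inv]
          norm_num
  calc (∑' k : ℕ, ENNReal.ofReal (1 / Real.sqrt (cfQ θ (2 * k) : ℝ)))
        + ∑' k : ℕ, ENNReal.ofReal (1 / Real.sqrt (cfQ θ (2 * k + 1) : ℝ))
      ≤ 4 + 4 := by
        gcongr
        · simpa using key 0 (by norm_num)
        · exact key 1 le_rfl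
    _ = 8 := by norm_num

lemma sum_log_cfQ (hθ : Irrational θ) :
    (∑' n : ℕ, ENNReal.ofReal (Real.log (cfQ θ n : ℝ) / (cfQ θ n : ℝ))) ≤ 16 := by
  have hb : ∀ n : ℕ, ENNReal.ofReal (Real.log (cfQ θ n : ℝ) / (cfQ θ n : ℝ))
      ≤ 2 * ENNReal.ofReal (1 / Real.sqrt (cfQ θ n : ℝ)) := by
    intro n
    have hq1 : (1 : ℝ) ≤ (cfQ θ n : ℝ) := by exact_mod_cast one_le_cfQ hθ n
    have hqpos : (0 : ℝ) < (cfQ θ n : ℝ) := by linarith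
    have hs : (0 : ℝ) < Real.sqrt (cfQ θ n : ℝ) := Real.sqrt_pos.mpr hqpos
    have hlog : Real.log (cfQ θ n : ℝ) ≤ 2 * Real.sqrt (cfQ θ n : ℝ) := by
      have h1 : Real.log (Real.sqrt (cfQ θ n : ℝ)) ≤ Real.sqrt (cfQ θ n : ℝ) - 1 :=
        Real.log_le_sub_one_of_pos hs
      have h2 : Real.log (Real.sqrt (cfQ θ n : ℝ)) = Real.log (cfQ θ n : ℝ) / 2 :=
        Real.log_sqrt hqpos.le
      linarith
    have hdiv : Real.log (cfQ θ n : ℝ) / (cfQ θ n : ℝ) ≤ 2 * (1 / Real.sqrt (cfQ θ n : ℝ)) := by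
      rw [div_le_iff₀ hqpos]
      have hsq : Real.sqrt (cfQ θ n : ℝ) * Real.sqrt (cfQ θ n : ℝ) = (cfQ θ n : ℝ) :=
        Real.mul_self_sqrt hqpos.le
      calc Real.log (cfQ θ n : ℝ) ≤ 2 * Real.sqrt (cfQ θ n : ℝ) := hlog
        _ = 2 * (1 / Real.sqrt (cfQ θ n : ℝ)) * (cfQ θ n : ℝ) := by
            field_simp
            nlinarith [hsq]
    calc ENNReal.ofReal (Real.log (cfQ θ n : ℝ) / (cfQ θ n : ℝ))
        ≤ ENNReal.ofReal (2 * (1 / Real.sqrt (cfQ θ n : ℝ))) := ENNReal.ofReal_le_ofReal hdiv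
      _ = ENNReal.ofReal 2 * ENNReal.ofReal (1 / Real.sqrt (cfQ θ n : ℝ)) :=
          ENNReal.ofReal_mul (by norm_num)
      _ = 2 * ENNReal.ofReal (1 / Real.sqrt (cfQ θ n : ℝ)) := by norm_num
  calc ∑' n : ℕ, ENNReal.ofReal (Real.log (cfQ θ n : ℝ) / (cfQ θ n : ℝ))
      ≤ ∑' n : ℕ, 2 * ENNReal.ofReal (1 / Real.sqrt (cfQ θ n : ℝ)) := ENNReal.tsum_le_tsum hb
    _ = 2 * ∑' n : ℕ, ENNReal.ofReal (1 / Real.sqrt (cfQ θ n : ℝ)) := ENNReal.tsum_mul_left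
    _ ≤ 2 * 8 := by gcongr; exact sum_inv_sqrt_cfQ hθ
    _ = 16 := by norm_num

end BrjunoAux

open BrjunoAux


set_option maxHeartbeats 1000000 in
/-- There is `C > 0` such that `B(θ) ≤ B(mθ) + C log m` for every positive integer `m`
and every irrational `θ` (inequality in `[0, ∞]`). -/
theorem brjunoB_mul_bound :
    ∃ C : ℝ, 0 < C ∧ ∀ m : ℕ, 0 < m → ∀ θ : ℝ, Irrational θ →
      brjunoB θ ≤ brjunoB (m * θ) + ENNReal.ofReal (C * Real.log m) := by
  refine ⟨40, by norm_num, ?_⟩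
  intro m hm θ hθ
  by_cases hm1 : m = 1
  · subst hm1
    simp only [Nat.cast_one, one_mul, Real.log_one, mul_zero, ENNReal.ofReal_zero, add_zero]
    exact le_rfl
  have hm2 : 2 ≤ m := by omega
  have hξ : Irrational ((m : ℝ) * θ) := hθ.natCast_mul hm.ne'
  set ξ : ℝ := (m : ℝ) * θ with hxi
  -- term functions
  set t : ℕ → ℝ≥0∞ := fun n => ENNReal.ofReal (Real.log (cfQ θ (n + 1) : ℝ) / (cfQ θ n : ℝ))
    with ht
  set T : ℕ → ℝ≥0∞ := fun j => ENNReal.ofReal (Real.log (cfQ ξ (j + 1) : ℝ) / (cfQ ξ j : ℝ))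
    with hT
  set u : ℕ → ℝ≥0∞ := fun n => ENNReal.ofReal (Real.log (2 * m : ℝ) / (cfQ θ n : ℝ)) with hu
  set v : ℕ → ℝ≥0∞ := fun n => ENNReal.ofReal (Real.log (cfQ θ n : ℝ) / (cfQ θ n : ℝ)) with hv
  have h2m1 : (1 : ℝ) ≤ 2 * m := by
    have : (1 : ℝ) ≤ (m : ℝ) := by exact_mod_cast hm
    linarith
  have hlog2m : (0 : ℝ) ≤ Real.log (2 * m : ℝ) := Real.log_nonneg h2m1
  have hqR : ∀ n, (1 : ℝ) ≤ (cfQ θ n : ℝ) := fun n => by exact_mod_cast one_le_cfQ hθ n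
  have hqRpos : ∀ n, (0 : ℝ) < (cfQ θ n : ℝ) := fun n => lt_of_lt_of_le one_pos (hqR n)
  have hQR : ∀ j, (1 : ℝ) ≤ (cfQ ξ j : ℝ) := fun j => by exact_mod_cast one_le_cfQ hξ j
  have hQRpos : ∀ j, (0 : ℝ) < (cfQ ξ j : ℝ) := fun j => lt_of_lt_of_le one_pos (hQR j)
  -- the set of big jumps
  set S : Set ℕ := {n | 2 * (m : ℤ) * cfQ θ n < cfQ θ (n + 1)} with hS
  have hex : ∀ n : S, ∃ j, cfQ ξ j ≤ cfQ θ n ∧ cfQ θ n ≤ (m : ℤ) * cfQ ξ j ∧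
      cfQ θ (n + 1) ≤ 2 * (m : ℤ) * cfQ ξ (j + 1) := fun n => big_jump hθ hm n n.2
  choose J hJ1 hJ2 hJ3 using hex
  -- J is injective
  have hmonoJ : ∀ a b : S, (a : ℕ) < (b : ℕ) → cfQ ξ (J a) < cfQ ξ (J b) := by
    intro a b hab
    have h1 : cfQ θ ((a : ℕ) + 1) ≤ cfQ θ (b : ℕ) := cfQ_mono hθ (by omega)
    have h2 : 2 * (m : ℤ) * cfQ θ (a : ℕ) < cfQ θ ((a : ℕ) + 1) := a.2
    have h3 := hJ1 a
    have h4 := hJ2 b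
    have hmz : (0 : ℤ) < (m : ℤ) := by exact_mod_cast hm
    have hQa : (0 : ℤ) < cfQ ξ (J a) := by have := one_le_cfQ hξ (J a); omega
    nlinarith
  have hJinj : Function.Injective J := by
    intro a b hab
    rcases lt_trichotomy (a : ℕ) (b : ℕ) with h | h | h
    · exact absurd (hab ▸ hmonoJ a b h) (lt_irrefl _)
    · exact Subtype.ext h
    · exact absurd (hab ▸ hmonoJ b a h) (lt_irrefl _)
  -- pointwise bound on big jumps
  have hbig : ∀ n : S, t (n : ℕ) ≤ T (J n) + u (n : ℕ) := by
    intro n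
    have h3 : (cfQ θ ((n : ℕ) + 1) : ℝ) ≤ 2 * m * (cfQ ξ (J n + 1) : ℝ) := by
      exact_mod_cast hJ3 n
    have hlog : Real.log (cfQ θ ((n : ℕ) + 1) : ℝ)
        ≤ Real.log (2 * m : ℝ) + Real.log (cfQ ξ (J n + 1) : ℝ) := by
      rw [← Real.log_mul (by positivity) (hQRpos (J n + 1)).ne']
      exact Real.log_le_log (hqRpos _) h3
    have hdiv : Real.log (cfQ θ ((n : ℕ) + 1) : ℝ) / (cfQ θ (n : ℕ) : ℝ)
        ≤ Real.log (2 * m : ℝ) / (cfQ θ (n : ℕ) : ℝ)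
          + Real.log (cfQ ξ (J n + 1) : ℝ) / (cfQ ξ (J n) : ℝ) := by
      have e1 : Real.log (cfQ θ ((n : ℕ) + 1) : ℝ) / (cfQ θ (n : ℕ) : ℝ)
          ≤ (Real.log (2 * m : ℝ) + Real.log (cfQ ξ (J n + 1) : ℝ)) / (cfQ θ (n : ℕ) : ℝ) := by
        gcongr
        exact (hqRpos _).le
      have e2 : Real.log (cfQ ξ (J n + 1) : ℝ) / (cfQ θ (n : ℕ) : ℝ)
          ≤ Real.log (cfQ ξ (J n + 1) : ℝ) / (cfQ ξ (J n) : ℝ) := by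
        gcongr
        · exact hQRpos _
        · exact_mod_cast hJ1 n
      rw [add_div] at e1
      linarith
    calc t (n : ℕ) ≤ ENNReal.ofReal (Real.log (2 * m : ℝ) / (cfQ θ (n : ℕ) : ℝ)
          + Real.log (cfQ ξ (J n + 1) : ℝ) / (cfQ ξ (J n) : ℝ)) := ENNReal.ofReal_le_ofReal hdiv
      _ ≤ u (n : ℕ) + T (J n) := ENNReal.ofReal_add_le
      _ = T (J n) + u (n : ℕ) := add_comm _ _
  -- pointwise bound on small jumps
  have hsmall : ∀ n : ℕ, n ∉ S → t n ≤ u n + v n := by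
    intro n hn
    have h3 : (cfQ θ (n + 1) : ℝ) ≤ 2 * m * (cfQ θ n : ℝ) := by
      have : cfQ θ (n + 1) ≤ 2 * (m : ℤ) * cfQ θ n := by
        have h4 : ¬ (2 * (m : ℤ) * cfQ θ n < cfQ θ (n + 1)) := hn
        omega
      exact_mod_cast this
    have hlog : Real.log (cfQ θ (n + 1) : ℝ)
        ≤ Real.log (2 * m : ℝ) + Real.log (cfQ θ n : ℝ) := by
      rw [← Real.log_mul (by positivity) (hqRpos n).ne']
      exact Real.log_le_log (hqRpos _) h3
    have hdiv : Real.log (cfQ θ (n + 1) : ℝ) / (cfQ θ n : ℝ)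
        ≤ Real.log (2 * m : ℝ) / (cfQ θ n : ℝ) + Real.log (cfQ θ n : ℝ) / (cfQ θ n : ℝ) := by
      rw [← add_div]
      gcongr
      exact (hqRpos _).le
    calc t n ≤ ENNReal.ofReal (Real.log (2 * m : ℝ) / (cfQ θ n : ℝ)
          + Real.log (cfQ θ n : ℝ) / (cfQ θ n : ℝ)) := ENNReal.ofReal_le_ofReal hdiv
      _ ≤ u n + v n := ENNReal.ofReal_add_le
  -- sum bounds
  have hU : (∑' n : ℕ, u n) ≤ ENNReal.ofReal (Real.log (2 * m : ℝ)) * 4 := by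
    have he : ∀ n : ℕ, u n = ENNReal.ofReal (Real.log (2 * m : ℝ))
        * ENNReal.ofReal (1 / (cfQ θ n : ℝ)) := by
      intro n
      rw [hu, ← ENNReal.ofReal_mul hlog2m]
      congr 1
      field_simp
    calc (∑' n : ℕ, u n)
        = ∑' n : ℕ, ENNReal.ofReal (Real.log (2 * m : ℝ)) * ENNReal.ofReal (1 / (cfQ θ n : ℝ)) :=
          tsum_congr he
      _ = ENNReal.ofReal (Real.log (2 * m : ℝ)) * ∑' n : ℕ, ENNReal.ofReal (1 / (cfQ θ n : ℝ)) :=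
          ENNReal.tsum_mul_left
      _ ≤ ENNReal.ofReal (Real.log (2 * m : ℝ)) * 4 := by gcongr; exact sum_inv_cfQ hθ
  have hV : (∑' n : ℕ, v n) ≤ 16 := sum_log_cfQ hθ
  -- put everything together
  have hsplit : brjunoB θ = (∑' n : S, t (n : ℕ)) + ∑' n : (Sᶜ : Set ℕ), t (n : ℕ) := by
    rw [brjunoB]
    exact (ENNReal.summable.tsum_add_tsum_compl ENNReal.summable).symm
  have hpartS : (∑' n : S, t (n : ℕ)) ≤ brjunoB ξ + ∑' n : ℕ, u n := by
    calc (∑' n : S, t (n : ℕ)) ≤ ∑' n : S, (T (J n) + u (n : ℕ)) := ENNReal.tsum_le_tsum hbig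
      _ = (∑' n : S, T (J n)) + ∑' n : S, u (n : ℕ) := ENNReal.tsum_add
      _ ≤ brjunoB ξ + ∑' n : ℕ, u n := by
          gcongr
          · exact ENNReal.tsum_comp_le_tsum_of_injective hJinj T
          · exact ENNReal.tsum_comp_le_tsum_of_injective Subtype.val_injective u
  have hpartSc : (∑' n : (Sᶜ : Set ℕ), t (n : ℕ)) ≤ (∑' n : ℕ, u n) + ∑' n : ℕ, v n := by
    calc (∑' n : (Sᶜ : Set ℕ), t (n : ℕ)) ≤ ∑' n : (Sᶜ : Set ℕ), (u (n : ℕ) + v (n : ℕ)) :=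
          ENNReal.tsum_le_tsum (fun n => hsmall (n : ℕ) n.2)
      _ = (∑' n : (Sᶜ : Set ℕ), u (n : ℕ)) + ∑' n : (Sᶜ : Set ℕ), v (n : ℕ) := ENNReal.tsum_add
      _ ≤ (∑' n : ℕ, u n) + ∑' n : ℕ, v n := by
          gcongr
          · exact ENNReal.tsum_comp_le_tsum_of_injective Subtype.val_injective u
          · exact ENNReal.tsum_comp_le_tsum_of_injective Subtype.val_injective v
  have htotal : brjunoB θ ≤ brjunoB ξ
      + (ENNReal.ofReal (Real.log (2 * m : ℝ)) * 4 + (ENNReal.ofReal (Real.log (2 * m : ℝ)) * 4 + 16)) := by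
    rw [hsplit]
    calc (∑' n : S, t (n : ℕ)) + ∑' n : (Sᶜ : Set ℕ), t (n : ℕ)
        ≤ (brjunoB ξ + ∑' n : ℕ, u n) + ((∑' n : ℕ, u n) + ∑' n : ℕ, v n) :=
          add_le_add hpartS hpartSc
      _ ≤ (brjunoB ξ + ENNReal.ofReal (Real.log (2 * m : ℝ)) * 4)
          + (ENNReal.ofReal (Real.log (2 * m : ℝ)) * 4 + 16) := by
          gcongr
      _ = brjunoB ξ + (ENNReal.ofReal (Real.log (2 * m : ℝ)) * 4
          + (ENNReal.ofReal (Real.log (2 * m : ℝ)) * 4 + 16)) := by ring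
  refine le_trans htotal ?_
  gcongr
  -- final numeric estimate
  have hmR : (2 : ℝ) ≤ (m : ℝ) := by exact_mod_cast hm2
  have hlogm : Real.log 2 ≤ Real.log (m : ℝ) := Real.log_le_log (by norm_num) hmR
  have hlog2 : (0.6931471803 : ℝ) < Real.log 2 := Real.log_two_gt_d9
  have hsplit2m : Real.log (2 * m : ℝ) = Real.log 2 + Real.log (m : ℝ) :=
    Real.log_mul (by norm_num) (by positivity)
  have hreal : 4 * Real.log (2 * m : ℝ) + (4 * Real.log (2 * m : ℝ) + 16) ≤ 40 * Real.log m := by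
    rw [hsplit2m]
    nlinarith [hlogm, hlog2]
  calc ENNReal.ofReal (Real.log (2 * m : ℝ)) * 4
      + (ENNReal.ofReal (Real.log (2 * m : ℝ)) * 4 + 16)
      = ENNReal.ofReal (4 * Real.log (2 * m : ℝ) + (4 * Real.log (2 * m : ℝ) + 16)) := by
        rw [ENNReal.ofReal_add (by linarith) (by linarith), ENNReal.ofReal_add (by linarith) (by norm_num)]
        rw [ENNReal.ofReal_mul (by norm_num : (0:ℝ) ≤ 4)]
        norm_num [mul_comm]
    _ ≤ ENNReal.ofReal (40 * Real.log m) := ENNReal.ofReal_le_ofReal hreal
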